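/- Let e be a cellular automaton on Σ^ℤ of radius r(e). Then for all cellular automata c, d, we have δ(e ∘ c, e ∘ d) ≤ (2·r(e)+1) · δ(c,d). In particular, left composition c ↦ e ∘ c is Lipschitz continuous with respect to δ. -/

import Mathlib

open MeasureTheory Filter Function

section BasicDefs

variable {A : Type}

/-- `f` admits a local rule of radius `r`: there is `F` depending only on
coordinates in `[-r, r]` such that `f x i = F (σ^i x)`. -/
def HasRadius (r : ℕ) (f : (ℤ → A) → (ℤ → A)) : Prop :=
  ∃ F : (ℤ → A) → A,
    (∀ x y : ℤ → A, (∀ j : ℤ, |j| ≤ (r : ℤ) → x j = y j) → F x = F y) ∧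
    ∀ (x : ℤ → A) (i : ℤ), f x i = F fun j => x (i + j)

/-- A cellular automaton is a map admitting a local rule of some radius. -/
def IsCA (f : (ℤ → A) → (ℤ → A)) : Prop := ∃ r, HasRadius r f

/-- The minimal radius of a cellular automaton. -/
noncomputable def rad (f : (ℤ → A) → (ℤ → A)) : ℕ := sInf {r : ℕ | HasRadius r f}

/-- Centered words of radius `r`. -/
def Word (A : Type) (r : ℕ) := (Finset.Icc (-(r : ℤ)) (r : ℤ) : Finset ℤ) → A

/-- The difference set of `c` and `d` for radius `r`: centered words of radius `r`
on which the images of `c` and `d` differ at the central cell. -/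
def diffSet (r : ℕ) (c d : (ℤ → A) → (ℤ → A)) : Set (Word A r) :=
  {w | ∃ x : ℤ → A, (∀ j : (Finset.Icc (-(r : ℤ)) (r : ℤ) : Finset ℤ), x j.1 = w j) ∧
        c x 0 ≠ d x 0}

/-- The shift map. -/
def shift (x : ℤ → A) : ℤ → A := fun i => x (i + 1)

/-- Preimages of the centered word `v` of radius `n` under the word function of `c`
used with radius `r`: centered words `u` of radius `n + r` such that some (equivalently,
by the radius assumption, every) configuration extending `u` maps under `c` to a
configuration extending `v` in its central part. -/
def wordPreimages (c : (ℤ → A) → (ℤ → A)) (n r : ℕ) (v : Word A n) :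
    Set (Word A (n + r)) :=
  {u | ∃ x : ℤ → A,
        (∀ j : (Finset.Icc (-((n + r : ℕ) : ℤ)) ((n + r : ℕ) : ℤ) : Finset ℤ), x j.1 = u j) ∧
        ∀ j : (Finset.Icc (-(n : ℤ)) (n : ℤ) : Finset ℤ), c x j.1 = v j}

-- The Cantor metric on configurations.
open Classical in
noncomputable def dC (x y : ℤ → A) : ℝ :=
  ∑' i : ℤ, if x i ≠ y i then (2 : ℝ) ^ (-|i|) else 0

/-- The Besicovitch pseudodistance on configurations. -/
noncomputable def dB (x y : ℤ → A) : ℝ :=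
  limsup (fun n : ℕ =>
    (({i : ℤ | |i| ≤ (n : ℤ) ∧ x i ≠ y i}.ncard : ℝ)) / (2 * (n : ℝ) + 1)) atTop

end BasicDefs

section FintypeDefs

variable {A : Type} [Fintype A]

/-- The normalized size of the difference set for radius `r`. -/
noncomputable def deltaR (r : ℕ) (c d : (ℤ → A) → (ℤ → A)) : ℝ :=
  (diffSet r c d).ncard / (Fintype.card A : ℝ) ^ (2 * r + 1)

/-- The uniform Bernoulli distance between two cellular automata (computed with the
common radius `max (rad c) (rad d)`; by radius-independence this is the canonical value). -/
noncomputable def delta (c d : (ℤ → A) → (ℤ → A)) : ℝ :=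
  deltaR (max (rad c) (rad d)) c d

end FintypeDefs

section MeasureDefs

variable {A : Type} [MeasurableSpace A]

/-- The pseudometric on cellular automata induced by the measure `μ`:
the measure of the cylinder of the difference set, i.e. of the set of
configurations on which `c` and `d` differ at coordinate `0`. -/
noncomputable def deltaMu (μ : Measure (ℤ → A)) (c d : (ℤ → A) → (ℤ → A)) : ℝ :=
  (μ {x | c x 0 ≠ d x 0}).toReal

/-- `c` preserves the measure `μ`. -/
def Preserves (μ : Measure (ℤ → A)) (c : (ℤ → A) → (ℤ → A)) : Prop :=
  ∀ B : Set (ℤ → A), MeasurableSet B → μ (c ⁻¹' B) = μ B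

/-- `μ` is shift-invariant. -/
def ShiftInvariant (μ : Measure (ℤ → A)) : Prop :=
  ∀ B : Set (ℤ → A), MeasurableSet B → μ (shift ⁻¹' B) = μ B

end MeasureDefs



section AuxLemmas

variable {A : Type}

lemma hasRadius_mono {r r' : ℕ} {f : (ℤ → A) → (ℤ → A)}
    (h : HasRadius r f) (hrr : r ≤ r') : HasRadius r' f := by
  obtain ⟨F, hF, hloc⟩ := h
  exact ⟨F, fun x y hxy => hF x y (fun j hj => hxy j (hj.trans (by exact_mod_cast hrr))), hloc⟩

lemma hasRadius_rad {f : (ℤ → A) → (ℤ → A)} (h : IsCA f) : HasRadius (rad f) f :=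
  Nat.sInf_mem h

lemma rad_le {r : ℕ} {f : (ℤ → A) → (ℤ → A)} (h : HasRadius r f) : rad f ≤ r :=
  Nat.sInf_le h

lemma hasRadius_comp {r s : ℕ} {f g : (ℤ → A) → (ℤ → A)}
    (hf : HasRadius r f) (hg : HasRadius s g) : HasRadius (r + s) (f ∘ g) := by
  obtain ⟨F, hF, hFloc⟩ := hf
  obtain ⟨G, hG, hGloc⟩ := hg
  refine ⟨fun y => F (fun j => G (fun k => y (j + k))), ?_, ?_⟩
  · intro x y hxy
    apply hF
    intro j hj
    apply hG
    intro k hk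
    apply hxy
    push_cast
    calc |j + k| ≤ |j| + |k| := abs_add_le _ _
      _ ≤ r + s := add_le_add hj hk
  · intro x i
    simp only [Function.comp_apply]
    rw [hFloc (g x) i]
    congr 1
    funext j
    rw [hGloc x (i + j)]
    congr 1
    funext k
    rw [add_assoc]

lemma apply_zero_eq {r : ℕ} {f : (ℤ → A) → (ℤ → A)} (h : HasRadius r f)
    {x y : ℤ → A} (hxy : ∀ j : ℤ, |j| ≤ (r : ℤ) → x j = y j) : f x 0 = f y 0 := by
  obtain ⟨F, hF, hloc⟩ := h
  rw [hloc x 0, hloc y 0]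
  apply hF
  intro j hj
  simpa using hxy j hj

lemma apply_translate {r : ℕ} {f : (ℤ → A) → (ℤ → A)} (hf : HasRadius r f)
    (x : ℤ → A) (j : ℤ) : f (fun m => x (j + m)) 0 = f x j := by
  obtain ⟨F, hF, hloc⟩ := hf
  rw [hloc x j, hloc _ 0]
  congr 1
  funext k
  simp

lemma card_coe_Icc (r : ℕ) :
    Fintype.card ((Finset.Icc (-(r : ℤ)) (r : ℤ) : Finset ℤ) : Type) = 2 * r + 1 := by
  rw [Fintype.card_coe, Int.card_Icc]
  omega

noncomputable instance wordFintype [Fintype A] (r : ℕ) : Fintype (Word A r) :=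
  inferInstanceAs (Fintype ((Finset.Icc (-(r : ℤ)) (r : ℤ) : Finset ℤ) → A))

lemma ncard_preimage_comp {α β γ : Type} [Fintype α] [Fintype β] [Fintype γ]
    {ι : γ → β} (hι : Function.Injective ι) (S : Set (γ → α)) :
    ((fun u : β → α => u ∘ ι) ⁻¹' S).ncard
      = S.ncard * Fintype.card α ^ (Fintype.card β - Fintype.card γ) := by
  classical
  let E : (β → α) ≃ (γ → α) × (↥((Set.range ι)ᶜ) → α) :=
    { toFun := fun u => (u ∘ ι, fun b => u b.1)
      invFun := fun p b =>
        if h : ∃ g, ι g = b then p.1 h.choose else p.2 ⟨b, fun hb => h hb⟩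
      left_inv := by
        intro u
        funext b
        by_cases h : ∃ g, ι g = b
        · simp only [dif_pos h]
          exact congrArg u h.choose_spec
        · simp only [dif_neg h]
      right_inv := by
        intro p
        refine Prod.ext ?_ ?_
        · funext g
          have h : ∃ g', ι g' = ι g := ⟨g, rfl⟩
          simp only [Function.comp_apply, dif_pos h]
          exact congrArg p.1 (hι h.choose_spec)
        · funext b
          have h : ¬ ∃ g, ι g = b.1 := fun hb => b.2 hb
          simp only [dif_neg h] }
  have h1 : (fun u : β → α => u ∘ ι) ⁻¹' S
      = E ⁻¹' (S ×ˢ (Set.univ : Set (↥((Set.range ι)ᶜ) → α))) := by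
    ext u
    simp [E, Set.mem_prod]
  have h2 : E ⁻¹' (S ×ˢ (Set.univ : Set (↥((Set.range ι)ᶜ) → α)))
      = E.symm '' (S ×ˢ (Set.univ : Set (↥((Set.range ι)ᶜ) → α))) := by
    rw [Equiv.image_eq_preimage_symm]
    simp
  rw [h1, h2, Set.ncard_image_of_injective _ E.symm.injective]
  have h3 : (S ×ˢ (Set.univ : Set (↥((Set.range ι)ᶜ) → α))).ncard
      = S.ncard * (Set.univ : Set (↥((Set.range ι)ᶜ) → α)).ncard := by
    rw [← Nat.card_coe_set_eq, ← Nat.card_coe_set_eq, ← Nat.card_coe_set_eq,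
      Nat.card_congr (Equiv.Set.prod _ _), Nat.card_prod]
  rw [h3, Set.ncard_univ, Nat.card_eq_fintype_card, Fintype.card_fun]
  congr 2
  rw [Fintype.card_compl_set, Set.card_range_of_injective hι]

lemma ncard_biUnion_le {ι α : Type} [Finite α] (s : Finset ι) (f : ι → Set α) :
    (⋃ i ∈ s, f i).ncard ≤ ∑ i ∈ s, (f i).ncard := by
  classical
  induction s using Finset.induction_on with
  | empty => simp
  | @insert a s ha ih =>
      rw [Finset.set_biUnion_insert, Finset.sum_insert ha]
      exact (Set.ncard_union_le _ _).trans (add_le_add_right ih _)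

lemma diffSet_radius_eq [Fintype A] {r R : ℕ} (hrR : r ≤ R)
    {c d : (ℤ → A) → (ℤ → A)} (hc : HasRadius r c) (hd : HasRadius r d) :
    (diffSet R c d).ncard = (diffSet r c d).ncard * Fintype.card A ^ (2 * R - 2 * r) := by
  classical
  have hmem : ∀ k : (Finset.Icc (-(r : ℤ)) (r : ℤ) : Finset ℤ),
      k.1 ∈ Finset.Icc (-(R : ℤ)) (R : ℤ) := by
    intro k
    have := k.2
    simp only [Finset.mem_Icc] at this ⊢
    omega
  set ι : ((Finset.Icc (-(r : ℤ)) (r : ℤ) : Finset ℤ) : Type) →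
      ((Finset.Icc (-(R : ℤ)) (R : ℤ) : Finset ℤ) : Type) :=
    fun k => ⟨k.1, hmem k⟩ with hιdef
  have hι : Function.Injective ι := by
    intro k k' h
    simp only [hιdef, Subtype.mk.injEq] at h
    exact Subtype.ext h
  have hset : diffSet R c d = (fun u : Word A R => u ∘ ι) ⁻¹' diffSet r c d := by
    ext u
    constructor
    · rintro ⟨x, hx, hne⟩
      exact ⟨x, fun k => hx (ι k), hne⟩
    · rintro ⟨x, hx, hne⟩
      set y : ℤ → A := fun m =>
        if h : m ∈ Finset.Icc (-(R : ℤ)) (R : ℤ) then u ⟨m, h⟩ else x m with hy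
      have hagree : ∀ j : ℤ, |j| ≤ (r : ℤ) → y j = x j := by
        intro j hj
        have hjr : j ∈ Finset.Icc (-(r : ℤ)) (r : ℤ) := by
          simp only [Finset.mem_Icc]
          exact ⟨neg_le_of_abs_le hj, le_of_abs_le hj⟩
        have hjR : j ∈ Finset.Icc (-(R : ℤ)) (R : ℤ) := hmem ⟨j, hjr⟩
        have := hx ⟨j, hjr⟩
        simp only [hy, dif_pos hjR]
        exact this.symm
      refine ⟨y, ?_, ?_⟩
      · intro k
        simp only [hy, dif_pos k.2]
      · rw [apply_zero_eq hc hagree, apply_zero_eq hd hagree]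
        exact hne
  rw [hset]
  have hpre := ncard_preimage_comp hι (diffSet r c d)
  rw [card_coe_Icc, card_coe_Icc, show (2 * R + 1) - (2 * r + 1) = 2 * R - 2 * r by omega]
    at hpre
  exact hpre

lemma deltaR_radius_eq [Fintype A] (hA : 1 ≤ Fintype.card A) {r R : ℕ} (hrR : r ≤ R)
    {c d : (ℤ → A) → (ℤ → A)} (hc : HasRadius r c) (hd : HasRadius r d) :
    deltaR R c d = deltaR r c d := by
  have hq0 : (0 : ℝ) < (Fintype.card A : ℝ) := by exact_mod_cast hA
  simp only [deltaR]
  rw [diffSet_radius_eq hrR hc hd]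
  push_cast
  rw [show 2 * R + 1 = (2 * R - 2 * r) + (2 * r + 1) by omega, pow_add]
  rw [div_eq_div_iff (by positivity) (by positivity)]
  ring

lemma key_count [Fintype A] {re r : ℕ} {e c d : (ℤ → A) → (ℤ → A)}
    (he : HasRadius re e) (hc : HasRadius r c) (hd : HasRadius r d) :
    (diffSet (re + r) (e ∘ c) (e ∘ d)).ncard
      ≤ (2 * re + 1) * ((diffSet r c d).ncard * Fintype.card A ^ (2 * re)) := by
  classical
  set R := re + r with hR
  have hmem : ∀ (j : ((Finset.Icc (-(re : ℤ)) (re : ℤ) : Finset ℤ) : Type))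
      (k : ((Finset.Icc (-(r : ℤ)) (r : ℤ) : Finset ℤ) : Type)),
      j.1 + k.1 ∈ Finset.Icc (-(R : ℤ)) (R : ℤ) := by
    intro j k
    have h1 := j.2
    have h2 := k.2
    simp only [Finset.mem_Icc] at h1 h2 ⊢
    push_cast [hR]
    omega
  set ι : ((Finset.Icc (-(re : ℤ)) (re : ℤ) : Finset ℤ) : Type) →
      ((Finset.Icc (-(r : ℤ)) (r : ℤ) : Finset ℤ) : Type) →
      ((Finset.Icc (-(R : ℤ)) (R : ℤ) : Finset ℤ) : Type) :=
    fun j k => ⟨j.1 + k.1, hmem j k⟩ with hιdef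
  have hι : ∀ j, Function.Injective (ι j) := by
    intro j k k' h
    simp only [hιdef, Subtype.mk.injEq] at h
    exact Subtype.ext (by omega)
  have hsub : diffSet R (e ∘ c) (e ∘ d)
      ⊆ ⋃ j : ((Finset.Icc (-(re : ℤ)) (re : ℤ) : Finset ℤ) : Type),
          (fun u : Word A R => u ∘ ι j) ⁻¹' diffSet r c d := by
    rintro u ⟨x, hx, hne⟩
    have hj : ∃ j : ℤ, |j| ≤ (re : ℤ) ∧ c x j ≠ d x j := by
      by_contra h
      push_neg at h
      exact hne (apply_zero_eq he h)
    obtain ⟨j, hjre, hcd⟩ := hj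
    have hjmem : j ∈ Finset.Icc (-(re : ℤ)) (re : ℤ) := by
      simp only [Finset.mem_Icc]
      constructor <;> [exact neg_le_of_abs_le hjre; exact le_of_abs_le hjre]
    refine Set.mem_iUnion.2 ⟨⟨j, hjmem⟩, ?_⟩
    refine ⟨fun m => x (j + m), ?_, ?_⟩
    · intro k
      exact hx (ι ⟨j, hjmem⟩ k)
    · rw [apply_translate hc x j, apply_translate hd x j]
      exact hcd
  have hcount : ∀ j, ((fun u : Word A R => u ∘ ι j) ⁻¹' diffSet r c d).ncard
      = (diffSet r c d).ncard * Fintype.card A ^ (2 * re) := by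
    intro j
    have hpre := ncard_preimage_comp (hι j) (diffSet r c d)
    rw [card_coe_Icc, card_coe_Icc,
      show (2 * R + 1) - (2 * r + 1) = 2 * re by simp only [hR]; omega] at hpre
    exact hpre
  calc (diffSet R (e ∘ c) (e ∘ d)).ncard
      ≤ (⋃ j : ((Finset.Icc (-(re : ℤ)) (re : ℤ) : Finset ℤ) : Type),
          (fun u : Word A R => u ∘ ι j) ⁻¹' diffSet r c d).ncard :=
        Set.ncard_le_ncard hsub (Set.toFinite _)
    _ = (⋃ j ∈ (Finset.univ : Finset ((Finset.Icc (-(re : ℤ)) (re : ℤ) : Finset ℤ) : Type)),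
          (fun u : Word A R => u ∘ ι j) ⁻¹' diffSet r c d).ncard := by
        simp
    _ ≤ ∑ j : ((Finset.Icc (-(re : ℤ)) (re : ℤ) : Finset ℤ) : Type),
          ((fun u : Word A R => u ∘ ι j) ⁻¹' diffSet r c d).ncard :=
        ncard_biUnion_le _ _
    _ = (2 * re + 1) * ((diffSet r c d).ncard * Fintype.card A ^ (2 * re)) := by
        rw [Finset.sum_congr rfl (fun j _ => hcount j), Finset.sum_const, Finset.card_univ,
          card_coe_Icc, smul_eq_mul]

end AuxLemmas

/-- left composition is Lipschitz:
`δ(e ∘ c, e ∘ d) ≤ (2 r(e) + 1) δ(c, d)`. -/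
theorem stmt2 {A : Type} [Fintype A] (hA : 2 ≤ Fintype.card A)
    (e : (ℤ → A) → (ℤ → A)) (he : IsCA e) :
    ∀ c d : (ℤ → A) → (ℤ → A), IsCA c → IsCA d →
      delta (e ∘ c) (e ∘ d) ≤ (2 * (rad e : ℝ) + 1) * delta c d := by
  intro c d hcCA hdCA
  classical
  have hq0 : (0 : ℝ) < (Fintype.card A : ℝ) := by
    have : 0 < Fintype.card A := by omega
    exact_mod_cast this
  set re := rad e with hre
  set r := max (rad c) (rad d) with hrdef
  have heR : HasRadius re e := hasRadius_rad he
  have hcR : HasRadius r c := hasRadius_mono (hasRadius_rad hcCA) (le_max_left _ _)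
  have hdR : HasRadius r d := hasRadius_mono (hasRadius_rad hdCA) (le_max_right _ _)
  have hecR : HasRadius (re + r) (e ∘ c) := hasRadius_comp heR hcR
  have hedR : HasRadius (re + r) (e ∘ d) := hasRadius_comp heR hdR
  set R' := max (rad (e ∘ c)) (rad (e ∘ d)) with hR'
  have hR'le : R' ≤ re + r := max_le (rad_le hecR) (rad_le hedR)
  have hecR' : HasRadius R' (e ∘ c) :=
    hasRadius_mono (hasRadius_rad ⟨re + r, hecR⟩) (le_max_left _ _)
  have hedR' : HasRadius R' (e ∘ d) :=
    hasRadius_mono (hasRadius_rad ⟨re + r, hedR⟩) (le_max_right _ _)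
  have hA1 : 1 ≤ Fintype.card A := by omega
  have step1 : delta (e ∘ c) (e ∘ d) = deltaR (re + r) (e ∘ c) (e ∘ d) :=
    (deltaR_radius_eq hA1 hR'le hecR' hedR').symm
  have step2 : deltaR (re + r) (e ∘ c) (e ∘ d)
      ≤ ((2 * re + 1) * ((diffSet r c d).ncard * Fintype.card A ^ (2 * re)) : ℕ)
        / (Fintype.card A : ℝ) ^ (2 * (re + r) + 1) := by
    apply div_le_div_of_nonneg_right ?_ (by positivity)
    exact_mod_cast key_count heR hcR hdR
  have step3 : (((2 * re + 1) * ((diffSet r c d).ncard * Fintype.card A ^ (2 * re)) : ℕ) : ℝ)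
        / (Fintype.card A : ℝ) ^ (2 * (re + r) + 1)
      = (2 * (re : ℝ) + 1) * delta c d := by
    have hq : (Fintype.card A : ℝ) ≠ 0 := ne_of_gt hq0
    simp only [delta, ← hrdef, deltaR]
    push_cast
    rw [show 2 * (re + r) + 1 = 2 * re + (2 * r + 1) by ring, pow_add]
    field_simp
    ring
  rw [step1]
  calc deltaR (re + r) (e ∘ c) (e ∘ d)
      ≤ _ := step2
    _ = _ := step3
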